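/- For every real x ≥ 1 and every p ∈ (0,1], the following chain of inequalities holds: 0 ≤ 1 − 1/x ≤ ((x+1)/2)^(p−1)·(x−1) ≤ (x^p − 1)/p ≤ ((x^(p−1) + 1)/2)·(x−1) ≤ x − 1. -/

import Mathlib

open Real intervalIntegral Set

lemma convexOn_rpow_nonpos {q : ℝ} (hq : q ≤ 0) :
    ConvexOn ℝ (Set.Ioi (0:ℝ)) fun t : ℝ => t ^ q := by
  have hint : interior (Set.Ioi (0:ℝ)) = Set.Ioi 0 := interior_Ioi
  refine convexOn_of_hasDerivWithinAt2_nonneg (convex_Ioi 0)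
    (f' := fun t => q * t ^ (q - 1)) (f'' := fun t => q * (q-1) * t ^ (q - 2)) ?_ ?_ ?_ ?_
  · exact fun t ht => (Real.continuousAt_rpow_const t q (Or.inl (ne_of_gt ht))).continuousWithinAt
  · rw [hint]
    intro t ht
    exact (Real.hasDerivAt_rpow_const (Or.inl (ne_of_gt ht))).hasDerivWithinAt
  · rw [hint]
    intro t ht
    have h := ((Real.hasDerivAt_rpow_const (p := q - 1) (Or.inl (ne_of_gt ht))).const_mul q)
    convert h.hasDerivWithinAt using 1
    exacts [rfl, rfl, by rw [show q - 1 - 1 = q - 2 by ring]; ring]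
  · rw [hint]
    intro t ht
    have h1 : 0 ≤ q * (q - 1) := by nlinarith
    exact mul_nonneg h1 (Real.rpow_nonneg ht.le _)

theorem stmt2 (x p : ℝ) (hx : 1 ≤ x) (hp0 : 0 < p) (hp1 : p ≤ 1) :
    0 ≤ 1 - 1 / x ∧
    1 - 1 / x ≤ ((x + 1) / 2) ^ (p - 1) * (x - 1) ∧
    ((x + 1) / 2) ^ (p - 1) * (x - 1) ≤ (x ^ p - 1) / p ∧
    (x ^ p - 1) / p ≤ ((x ^ (p - 1) + 1) / 2) * (x - 1) ∧
    ((x ^ (p - 1) + 1) / 2) * (x - 1) ≤ x - 1 := by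
  rcases eq_or_lt_of_le hx with rfl | hx1
  · simp [Real.one_rpow]
  set q : ℝ := p - 1 with hqdef
  have hq0 : q ≤ 0 := by simp [hqdef]; linarith
  have hqgt : -1 < q := by simp [hqdef]; linarith
  have hx0 : (0:ℝ) < x := by linarith
  set m : ℝ := (x + 1) / 2 with hmdef
  have hm1 : 1 ≤ m := by simp [hmdef]; linarith
  have hm0 : (0:ℝ) < m := by linarith
  have hmx : m ≤ x := by simp [hmdef]; linarith
  -- the integral of t^q on [1, x]
  have hI : ∫ t in (1:ℝ)..x, t ^ q = (x ^ p - 1) / p := by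
    rw [integral_rpow (Or.inl hqgt)]
    have : q + 1 = p := by ring
    rw [this, Real.one_rpow]
  have hInt : IntervalIntegrable (fun t : ℝ => t ^ q) MeasureTheory.volume 1 x := by
    apply intervalIntegral.intervalIntegrable_rpow
    right
    rw [Set.uIcc_of_le hx]
    intro h
    exact absurd h.1 (by norm_num)
  have hIntr : IntervalIntegrable (fun t : ℝ => (x + 1 - t) ^ q) MeasureTheory.volume 1 x := by
    have := (hInt.comp_sub_left (x + 1)).symm
    simpa using this
  have hconv := convexOn_rpow_nonpos hq0
  -- midpoint Hermite-Hadamard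
  have step3 : m ^ q * (x - 1) ≤ ∫ t in (1:ℝ)..x, t ^ q := by
    have hrefl : (∫ t in (1:ℝ)..x, (x + 1 - t) ^ q) = ∫ t in (1:ℝ)..x, t ^ q := by
      have := intervalIntegral.integral_comp_sub_left (a := 1) (b := x)
        (fun s : ℝ => s ^ q) (x + 1)
      simpa using this
    have key : ∀ t ∈ Set.Icc (1:ℝ) x, m ^ q ≤ (t ^ q + (x + 1 - t) ^ q) / 2 := by
      intro t ht
      obtain ⟨ht1, htx⟩ := ht
      have h1 : (0:ℝ) < t := by linarith
      have h2 : (0:ℝ) < x + 1 - t := by linarith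
      have h := hconv.2 (Set.mem_Ioi.2 h1) (Set.mem_Ioi.2 h2)
        (by norm_num : (0:ℝ) ≤ 1/2) (by norm_num : (0:ℝ) ≤ 1/2) (by norm_num)
      have harg : (1/2 : ℝ) • t + (1/2 : ℝ) • (x + 1 - t) = m := by
        simp [smul_eq_mul, hmdef]; ring
      rw [harg] at h
      calc m ^ q ≤ (1/2:ℝ) • t ^ q + (1/2:ℝ) • (x + 1 - t) ^ q := h
        _ = (t ^ q + (x + 1 - t) ^ q) / 2 := by simp [smul_eq_mul]; ring
    calc m ^ q * (x - 1) = ∫ _ in (1:ℝ)..x, m ^ q := by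
          rw [intervalIntegral.integral_const, smul_eq_mul]; ring
      _ ≤ ∫ t in (1:ℝ)..x, (t ^ q + (x + 1 - t) ^ q) / 2 := by
          apply intervalIntegral.integral_mono_on hx
            intervalIntegrable_const ((hInt.add hIntr).div_const 2) key
      _ = ((∫ t in (1:ℝ)..x, t ^ q) + ∫ t in (1:ℝ)..x, (x + 1 - t) ^ q) / 2 := by
          rw [intervalIntegral.integral_div, intervalIntegral.integral_add hInt hIntr]
      _ = ∫ t in (1:ℝ)..x, t ^ q := by rw [hrefl]; ring
  -- trapezoid Hermite-Hadamard
  have step4 : (∫ t in (1:ℝ)..x, t ^ q) ≤ ((x ^ q + 1) / 2) * (x - 1) := by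
    set c : ℝ := (x ^ q - 1) / (x - 1) with hcdef
    have key : ∀ t ∈ Set.Icc (1:ℝ) x, t ^ q ≤ 1 + c * (t - 1) := by
      intro t ht
      obtain ⟨ht1, htx⟩ := ht
      have hx1' : (0:ℝ) < x - 1 := by linarith
      have ha : (0:ℝ) ≤ (x - t) / (x - 1) := div_nonneg (by linarith) (by linarith)
      have hb : (0:ℝ) ≤ (t - 1) / (x - 1) := div_nonneg (by linarith) (by linarith)
      have hab : (x - t) / (x - 1) + (t - 1) / (x - 1) = 1 := by field_simp; ring
      have h := hconv.2 (Set.mem_Ioi.2 one_pos) (Set.mem_Ioi.2 hx0) ha hb hab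
      have harg : ((x - t) / (x - 1)) • (1:ℝ) + ((t - 1) / (x - 1)) • x = t := by
        simp [smul_eq_mul]; field_simp; ring
      rw [harg] at h
      calc t ^ q ≤ ((x - t) / (x - 1)) • (1:ℝ) ^ q + ((t - 1) / (x - 1)) • x ^ q := h
        _ = 1 + c * (t - 1) := by
            simp [smul_eq_mul, Real.one_rpow, hcdef]; field_simp; ring
    have hline : (∫ t in (1:ℝ)..x, (1 + c * (t - 1))) = (x - 1) + c * (x - 1) ^ 2 / 2 := by
      have hderiv : ∀ t ∈ Set.uIcc (1:ℝ) x,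
          HasDerivAt (fun s : ℝ => s + c / 2 * (s - 1) ^ 2) (1 + c * (t - 1)) t := by
        intro t _
        have h1 : HasDerivAt (fun t : ℝ => t - 1) 1 t := (hasDerivAt_id t).sub_const 1
        have h3 : HasDerivAt (fun s : ℝ => s + c / 2 * (s - 1) ^ 2) (1 + c / 2 * (2 * (t-1) ^ 1 * 1)) t :=
          (hasDerivAt_id t).add ((h1.pow 2).const_mul (c / 2))
        convert h3 using 1
        ring
      rw [intervalIntegral.integral_eq_sub_of_hasDerivAt hderiv
        (Continuous.intervalIntegrable (by continuity) _ _)]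
      ring
    calc (∫ t in (1:ℝ)..x, t ^ q) ≤ ∫ t in (1:ℝ)..x, (1 + c * (t - 1)) := by
          apply intervalIntegral.integral_mono_on hx hInt
            (Continuous.intervalIntegrable (by continuity) _ _) key
      _ = (x - 1) + c * (x - 1) ^ 2 / 2 := hline
      _ = ((x ^ q + 1) / 2) * (x - 1) := by
          have hc : c * (x - 1) = x ^ q - 1 :=
            div_mul_cancel₀ _ (by intro h; apply absurd h; intro h'; linarith [h'] : x - 1 ≠ 0)
          linear_combination ((x - 1) / 2) * hc
  -- part 2 auxiliary
  have hmq : 1 / x ≤ m ^ q := by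
    have h1 : m ^ (1 - p) ≤ x := by
      calc m ^ (1 - p) ≤ m ^ (1:ℝ) := Real.rpow_le_rpow_of_exponent_le hm1 (by linarith)
        _ = m := Real.rpow_one m
        _ ≤ x := hmx
    have h2 : m ^ q = (m ^ (1 - p))⁻¹ := by
      rw [show q = -(1 - p) by ring, Real.rpow_neg hm0.le]
    rw [h2, one_div]
    exact inv_anti₀ (Real.rpow_pos_of_pos hm0 _) h1
  have hxq1 : x ^ q ≤ 1 := Real.rpow_le_one_of_one_le_of_nonpos hx hq0
  refine ⟨?_, ?_, ?_, ?_, ?_⟩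
  · rw [sub_nonneg]
    exact div_le_one_of_le₀ hx (by linarith)
  · have : 1 - 1 / x = (1 / x) * (x - 1) := by field_simp
    rw [this]
    exact mul_le_mul_of_nonneg_right hmq (by linarith)
  · rw [← hI]; exact step3
  · rw [← hI]; exact step4
  · nlinarith [hxq1]
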